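/- Fix β > 0 and k ∈ ℕ. The space F_0 of pairs (Γ,p), where Γ = (g_1,…,g_k) is a k-tuple of homeomorphisms of [0,1] belonging to C^+_β and p = (p_1,…,p_k) is a probability vector, equipped with d((Γ,p),(Δ,q)) = Σ_{i=1}^k (|p_i − q_i| + ‖g_i − h_i‖_∞ + ‖g_i^{-1} − h_i^{-1}‖_∞ + sup_{[0,β]∪[1−β,1]} |g_i' − h_i'|), is a complete metric space. -/

import Mathlib

open MeasureTheory Set Filter Topology

noncomputable section

/-- The Markov operator of an iterated function system `(g, p)` on `[0,1]`. -/
def markovOp {k : ℕ} (g : Fin k → ℝ → ℝ) (p : Fin k → ℝ) (μ : Measure ℝ) : Measure ℝ :=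
  ∑ i : Fin k, ENNReal.ofReal (p i) • Measure.map (g i) μ

/-- `p` is a probability vector. -/
def ProbVec {k : ℕ} (p : Fin k → ℝ) : Prop :=
  (∀ i, 0 ≤ p i) ∧ ∑ i : Fin k, p i = 1

/-- Membership in `M₁(0,1)`: Borel probability measures on `[0,1]` giving full mass
to the open interval `(0,1)`. -/
def MemM1 (μ : Measure ℝ) : Prop :=
  IsProbabilityMeasure μ ∧ μ (Ioo (0 : ℝ) 1) = 1

/-- The set `N_{M,α}`. -/
def Nset (M α : ℝ) : Set (Measure ℝ) :=
  {μ | MemM1 μ ∧ ∀ x ∈ Icc (0 : ℝ) 1,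
    μ (Icc (0 : ℝ) x) ≤ ENNReal.ofReal (M * x ^ α) ∧
    μ (Icc (1 - x) 1) ≤ ENNReal.ofReal (M * x ^ α)}

/-- The class `C⁺_β`: continuous nondecreasing maps of `[0,1]` fixing `0` and `1`,
continuously differentiable on `[0,β]` and `[1-β,1]`. -/
structure CPlus (β : ℝ) (g : ℝ → ℝ) : Prop where
  mapsTo : MapsTo g (Icc (0 : ℝ) 1) (Icc (0 : ℝ) 1)
  contOn : ContinuousOn g (Icc (0 : ℝ) 1)
  mono : MonotoneOn g (Icc (0 : ℝ) 1)
  map_zero : g 0 = 0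
  map_one : g 1 = 1
  c1_left : ContDiffOn ℝ 1 g (Icc (0 : ℝ) β)
  c1_right : ContDiffOn ℝ 1 g (Icc (1 - β) 1)

/-- `g` is a homeomorphism of `[0,1]` (a continuous bijection of the compact
interval; continuity of the inverse is automatic). -/
def IsIccHomeo (g : ℝ → ℝ) : Prop :=
  MapsTo g (Icc (0 : ℝ) 1) (Icc (0 : ℝ) 1) ∧ InjOn g (Icc (0 : ℝ) 1) ∧
    SurjOn g (Icc (0 : ℝ) 1) (Icc (0 : ℝ) 1)

/-- Admissible iterated function system generated by homeomorphisms in `C⁺_β`: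
strictly positive probabilities, maps moving every interior point both down and up,
and positive Lyapunov exponents at the common fixed points `0` and `1`
(the one-sided derivatives there being positive). -/
structure Admissible (β : ℝ) {k : ℕ} (g : Fin k → ℝ → ℝ) (p : Fin k → ℝ) : Prop where
  cplus : ∀ i, CPlus β (g i)
  homeo : ∀ i, IsIccHomeo (g i)
  p_pos : ∀ i, 0 < p i
  p_sum : ∑ i : Fin k, p i = 1
  below : ∀ x ∈ Ioo (0 : ℝ) 1, ∃ i, g i x < x
  above : ∀ x ∈ Ioo (0 : ℝ) 1, ∃ j, x < g j x
  deriv0_pos : ∀ i, 0 < derivWithin (g i) (Icc (0 : ℝ) 1) 0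
  deriv1_pos : ∀ i, 0 < derivWithin (g i) (Icc (0 : ℝ) 1) 1
  lyap0 : 0 < ∑ i : Fin k, p i * Real.log (derivWithin (g i) (Icc (0 : ℝ) 1) 0)
  lyap1 : 0 < ∑ i : Fin k, p i * Real.log (derivWithin (g i) (Icc (0 : ℝ) 1) 1)

/-- Composition of the maps of an IFS along a finite word:
`wordComp g [i_n, …, i_1] = g i_n ∘ ⋯ ∘ g i_1`. -/
def wordComp {k : ℕ} (g : Fin k → ℝ → ℝ) : List (Fin k) → ℝ → ℝ
  | [], x => x
  | i :: w, x => g i (wordComp g w x)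

/-- Composition of the first `n` maps along an infinite word `ω`:
`iterComp g ω n = g (ω (n-1)) ∘ ⋯ ∘ g (ω 0)`. -/
def iterComp {k : ℕ} (g : Fin k → ℝ → ℝ) (ω : ℕ → Fin k) : ℕ → ℝ → ℝ
  | 0 => id
  | n + 1 => g (ω n) ∘ iterComp g ω n

/-- Supremum of `|f|` over a set `K`. -/
def supOn (K : Set ℝ) (f : ℝ → ℝ) : ℝ :=
  sSup ((fun x => |f x|) '' K)

/-- The Fortet–Mourier distance: the Fortet–Mourier norm of `μ - ν`. -/
def FMdist (μ ν : Measure ℝ) : ℝ :=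
  sSup {r | ∃ f : ℝ → ℝ, (∀ x, |f x| ≤ 1) ∧ LipschitzWith 1 f ∧
    r = (∫ x, f x ∂μ) - ∫ x, f x ∂ν}

/-- The distance `d₀` between two iterated function systems. -/
def dzero {k : ℕ} (S T : Fin k → ℝ → ℝ) (p q : Fin k → ℝ) : ℝ :=
  ∑ i : Fin k, (|p i - q i| + supOn (Icc (0 : ℝ) 1) (fun x => S i x - T i x))

/-- `g` is absolutely continuous on `[0,1]`. -/
def AbsCont (g : ℝ → ℝ) : Prop :=
  ∀ ε > 0, ∃ δ > 0, ∀ n : ℕ, ∀ a b : Fin n → ℝ,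
    (∀ i, 0 ≤ a i ∧ a i ≤ b i ∧ b i ≤ 1) →
    (Pairwise fun i j => Disjoint (Ioo (a i) (b i)) (Ioo (a j) (b j))) →
    ∑ i, (b i - a i) < δ → ∑ i, |g (b i) - g (a i)| < ε

/-- Membership in `M₁^ε`: some Borel subset of `[0,1]` of Lebesgue measure `< ε`
carries `μ`-mass `> 1 - ε/2`. -/
def MemM1eps (ε : ℝ) (μ : Measure ℝ) : Prop :=
  ∃ A : Set ℝ, MeasurableSet A ∧ A ⊆ Icc (0 : ℝ) 1 ∧
    volume A < ENNReal.ofReal ε ∧ ENNReal.ofReal (1 - ε / 2) < μ A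

/-- Clamping of a real number to `[0,1]`. -/
def clampI (x : ℝ) : ℝ := max 0 (min 1 x)

/-- A point of the space `F₀`: a `k`-tuple of homeomorphisms of `[0,1]` in `C⁺_β`
(together with their inverses) and a probability vector.  The maps are normalized
outside `[0,1]` by clamping, so that they are determined by their restrictions
to `[0,1]`. -/
structure Sys (β : ℝ) (k : ℕ) where
  g : Fin k → ℝ → ℝ
  ginv : Fin k → ℝ → ℝ
  p : Fin k → ℝ
  prob : ProbVec p
  cplus : ∀ i, CPlus β (g i)
  ginv_mapsTo : ∀ i, MapsTo (ginv i) (Icc (0 : ℝ) 1) (Icc (0 : ℝ) 1)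
  left_inv : ∀ i, ∀ x ∈ Icc (0 : ℝ) 1, ginv i (g i x) = x
  right_inv : ∀ i, ∀ y ∈ Icc (0 : ℝ) 1, g i (ginv i y) = y
  g_clamp : ∀ i x, g i x = g i (clampI x)
  ginv_clamp : ∀ i x, ginv i x = ginv i (clampI x)

/-- The metric `d` on the space of systems. -/
def dSys {β : ℝ} {k : ℕ} (A B : Sys β k) : ℝ :=
  ∑ i : Fin k,
    (|A.p i - B.p i|
      + supOn (Icc (0 : ℝ) 1) (fun x => A.g i x - B.g i x)
      + supOn (Icc (0 : ℝ) 1) (fun x => A.ginv i x - B.ginv i x)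
      + max
          (supOn (Icc (0 : ℝ) β)
            (fun x => derivWithin (A.g i) (Icc (0 : ℝ) β) x -
              derivWithin (B.g i) (Icc (0 : ℝ) β) x))
          (supOn (Icc (1 - β) 1)
            (fun x => derivWithin (A.g i) (Icc (1 - β) 1) x -
              derivWithin (B.g i) (Icc (1 - β) 1) x)))

/-- The set `F`: admissible systems all of whose maps are absolutely continuous. -/
def Fset (β : ℝ) (k : ℕ) : Set (Sys β k) :=
  {A | Admissible β A.g A.p ∧ ∀ i, AbsCont (A.g i)}

/-- Closure of a set of systems with respect to the metric `dSys`. -/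
def closureSys {β : ℝ} {k : ℕ} (S : Set (Sys β k)) : Set (Sys β k) :=
  {A | ∀ ε > 0, ∃ B ∈ S, dSys A B < ε}

/-- `S` is nowhere dense in the subspace `X` (with respect to `dSys`):
every ball centered in `X` contains a point of `X` some ball around which
misses `S ∩ X`. -/
def NowhereDenseIn {β : ℝ} {k : ℕ} (X S : Set (Sys β k)) : Prop :=
  ∀ A ∈ X, ∀ ε > 0, ∃ B ∈ X, dSys A B < ε ∧ ∃ δ > 0, ∀ C ∈ X ∩ S, δ ≤ dSys B C

/-- Cesàro averages `(ν + Pν + ⋯ + P^{n-1}ν)/n` of a measure under the Markov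
operator of an IFS. -/
def cesaro {k : ℕ} (g : Fin k → ℝ → ℝ) (p : Fin k → ℝ) (ν : Measure ℝ) (n : ℕ) :
    Measure ℝ :=
  (n : ENNReal)⁻¹ • ∑ j ∈ Finset.range n, (fun m => markovOp g p m)^[j] ν



section AuxSup

lemma supOn_nonneg (K : Set ℝ) (f : ℝ → ℝ) : 0 ≤ supOn K f :=
  Real.sSup_nonneg (by rintro r ⟨y, _, rfl⟩; exact abs_nonneg _)

lemma supOn_le {K : Set ℝ} {f : ℝ → ℝ} {c : ℝ} (hc : 0 ≤ c) (h : ∀ x ∈ K, |f x| ≤ c) :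
    supOn K f ≤ c :=
  Real.sSup_le (by rintro r ⟨y, hy, rfl⟩; exact h y hy) hc

lemma le_supOn {K : Set ℝ} {f : ℝ → ℝ} (h : BddAbove ((fun x => |f x|) '' K)) {x : ℝ}
    (hx : x ∈ K) : |f x| ≤ supOn K f :=
  le_csSup h ⟨x, hx, rfl⟩

lemma supOn_comm (K : Set ℝ) (f g : ℝ → ℝ) :
    supOn K (fun x => f x - g x) = supOn K (fun x => g x - f x) := by
  unfold supOn
  congr 1
  ext r
  constructor <;> rintro ⟨y, hy, rfl⟩
  · exact ⟨y, hy, (abs_sub_comm (g y) (f y))⟩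
  · exact ⟨y, hy, (abs_sub_comm (f y) (g y))⟩

lemma bddAbove_abs_image {K : Set ℝ} {f : ℝ → ℝ} {c : ℝ} (h : ∀ x ∈ K, |f x| ≤ c) :
    BddAbove ((fun x => |f x|) '' K) :=
  ⟨c, by rintro r ⟨y, hy, rfl⟩; exact h y hy⟩

lemma bddAbove_abs_image_of_continuousOn {K : Set ℝ} (hK : IsCompact K) {f : ℝ → ℝ}
    (hf : ContinuousOn f K) : BddAbove ((fun x => |f x|) '' K) :=
  hK.bddAbove_image hf.abs

lemma supOn_triangle {K : Set ℝ} {f g h : ℝ → ℝ}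
    (h1 : BddAbove ((fun x => |(fun y => f y - g y) x|) '' K))
    (h2 : BddAbove ((fun x => |(fun y => g y - h y) x|) '' K)) :
    supOn K (fun x => f x - h x) ≤
      supOn K (fun x => f x - g x) + supOn K (fun x => g x - h x) := by
  refine Real.sSup_le ?_ (add_nonneg (supOn_nonneg _ _) (supOn_nonneg _ _))
  rintro r ⟨y, hy, rfl⟩
  calc |f y - h y| ≤ |f y - g y| + |g y - h y| := abs_sub_le _ _ _
    _ ≤ _ := add_le_add (le_supOn h1 hy) (le_supOn h2 hy)

lemma abs_le_one_of_mem {y : ℝ} (h : y ∈ Icc (0 : ℝ) 1) : |y| ≤ 1 :=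
  abs_le.2 ⟨by linarith [h.1], h.2⟩

lemma clampI_mem (x : ℝ) : clampI x ∈ Icc (0 : ℝ) 1 :=
  ⟨le_max_left _ _, max_le zero_le_one (min_le_left _ _)⟩

lemma clampI_of_mem {x : ℝ} (h : x ∈ Icc (0 : ℝ) 1) : clampI x = x := by
  unfold clampI
  rw [min_eq_right h.2, max_eq_right h.1]

end AuxSup

section AuxSys

variable {β : ℝ} {k : ℕ}

lemma Sys.g_mem (A : Sys β k) (i : Fin k) {x : ℝ} (hx : x ∈ Icc (0 : ℝ) 1) :
    A.g i x ∈ Icc (0 : ℝ) 1 := (A.cplus i).mapsTo hx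

lemma g_diff_bdd (A B : Sys β k) (i : Fin k) :
    BddAbove ((fun x => |(fun y => A.g i y - B.g i y) x|) '' Icc (0 : ℝ) 1) :=
  bddAbove_abs_image (c := 2) fun x hx => by
    have h1 := abs_le_one_of_mem (A.g_mem i hx)
    have h2 := abs_le_one_of_mem (B.g_mem i hx)
    calc |A.g i x - B.g i x| ≤ |A.g i x| + |B.g i x| := abs_sub _ _
      _ ≤ 2 := by linarith

lemma ginv_diff_bdd (A B : Sys β k) (i : Fin k) :
    BddAbove ((fun x => |(fun y => A.ginv i y - B.ginv i y) x|) '' Icc (0 : ℝ) 1) :=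
  bddAbove_abs_image (c := 2) fun x hx => by
    have h1 := abs_le_one_of_mem (A.ginv_mapsTo i hx)
    have h2 := abs_le_one_of_mem (B.ginv_mapsTo i hx)
    calc |A.ginv i x - B.ginv i x| ≤ |A.ginv i x| + |B.ginv i x| := abs_sub _ _
      _ ≤ 2 := by linarith

lemma derivL_contOn (hβ : 0 < β) (A : Sys β k) (i : Fin k) :
    ContinuousOn (derivWithin (A.g i) (Icc (0 : ℝ) β)) (Icc (0 : ℝ) β) :=
  (A.cplus i).c1_left.continuousOn_derivWithin (uniqueDiffOn_Icc hβ) le_rfl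

lemma derivR_contOn (hβ : 0 < β) (A : Sys β k) (i : Fin k) :
    ContinuousOn (derivWithin (A.g i) (Icc (1 - β) 1)) (Icc (1 - β) 1) :=
  (A.cplus i).c1_right.continuousOn_derivWithin (uniqueDiffOn_Icc (by linarith)) le_rfl

lemma derivL_diff_bdd (hβ : 0 < β) (A B : Sys β k) (i : Fin k) :
    BddAbove ((fun x => |(fun y => derivWithin (A.g i) (Icc (0 : ℝ) β) y -
      derivWithin (B.g i) (Icc (0 : ℝ) β) y) x|) '' Icc (0 : ℝ) β) :=
  bddAbove_abs_image_of_continuousOn isCompact_Icc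
    ((derivL_contOn hβ A i).sub (derivL_contOn hβ B i))

lemma derivR_diff_bdd (hβ : 0 < β) (A B : Sys β k) (i : Fin k) :
    BddAbove ((fun x => |(fun y => derivWithin (A.g i) (Icc (1 - β) 1) y -
      derivWithin (B.g i) (Icc (1 - β) 1) y) x|) '' Icc (1 - β) 1) :=
  bddAbove_abs_image_of_continuousOn isCompact_Icc
    ((derivR_contOn hβ A i).sub (derivR_contOn hβ B i))

/-- The `i`-th summand of `dSys`. -/
def dTerm (A B : Sys β k) (i : Fin k) : ℝ :=
  |A.p i - B.p i|
    + supOn (Icc (0 : ℝ) 1) (fun x => A.g i x - B.g i x)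
    + supOn (Icc (0 : ℝ) 1) (fun x => A.ginv i x - B.ginv i x)
    + max
        (supOn (Icc (0 : ℝ) β)
          (fun x => derivWithin (A.g i) (Icc (0 : ℝ) β) x -
            derivWithin (B.g i) (Icc (0 : ℝ) β) x))
        (supOn (Icc (1 - β) 1)
          (fun x => derivWithin (A.g i) (Icc (1 - β) 1) x -
            derivWithin (B.g i) (Icc (1 - β) 1) x))

lemma dSys_eq_sum_dTerm (A B : Sys β k) : dSys A B = ∑ i : Fin k, dTerm A B i := rfl

lemma dmax_nonneg (A B : Sys β k) (i : Fin k) :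
    0 ≤ max
      (supOn (Icc (0 : ℝ) β)
        (fun x => derivWithin (A.g i) (Icc (0 : ℝ) β) x -
          derivWithin (B.g i) (Icc (0 : ℝ) β) x))
      (supOn (Icc (1 - β) 1)
        (fun x => derivWithin (A.g i) (Icc (1 - β) 1) x -
          derivWithin (B.g i) (Icc (1 - β) 1) x)) :=
  le_trans (supOn_nonneg _ _) (le_max_left _ _)

lemma dTerm_nonneg (A B : Sys β k) (i : Fin k) : 0 ≤ dTerm A B i := by
  have h1 := abs_nonneg (A.p i - B.p i)
  have h2 := supOn_nonneg (Icc (0 : ℝ) 1) (fun x => A.g i x - B.g i x)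
  have h3 := supOn_nonneg (Icc (0 : ℝ) 1) (fun x => A.ginv i x - B.ginv i x)
  have h4 := dmax_nonneg A B i
  unfold dTerm
  linarith

lemma dSys_nonneg' (A B : Sys β k) : 0 ≤ dSys A B := by
  rw [dSys_eq_sum_dTerm]
  exact Finset.sum_nonneg fun i _ => dTerm_nonneg A B i

lemma dTerm_le_dSys (A B : Sys β k) (i : Fin k) : dTerm A B i ≤ dSys A B := by
  rw [dSys_eq_sum_dTerm]
  exact Finset.single_le_sum (fun j _ => dTerm_nonneg A B j) (Finset.mem_univ i)

lemma p_pt_le (A B : Sys β k) (i : Fin k) : |A.p i - B.p i| ≤ dSys A B := by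
  refine le_trans ?_ (dTerm_le_dSys A B i)
  have h2 := supOn_nonneg (Icc (0 : ℝ) 1) (fun x => A.g i x - B.g i x)
  have h3 := supOn_nonneg (Icc (0 : ℝ) 1) (fun x => A.ginv i x - B.ginv i x)
  have h4 := dmax_nonneg A B i
  unfold dTerm
  linarith

lemma gsup_le_dSys (A B : Sys β k) (i : Fin k) :
    supOn (Icc (0 : ℝ) 1) (fun x => A.g i x - B.g i x) ≤ dSys A B := by
  refine le_trans ?_ (dTerm_le_dSys A B i)
  have h1 := abs_nonneg (A.p i - B.p i)
  have h3 := supOn_nonneg (Icc (0 : ℝ) 1) (fun x => A.ginv i x - B.ginv i x)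
  have h4 := dmax_nonneg A B i
  unfold dTerm
  linarith

lemma ginvsup_le_dSys (A B : Sys β k) (i : Fin k) :
    supOn (Icc (0 : ℝ) 1) (fun x => A.ginv i x - B.ginv i x) ≤ dSys A B := by
  refine le_trans ?_ (dTerm_le_dSys A B i)
  have h1 := abs_nonneg (A.p i - B.p i)
  have h2 := supOn_nonneg (Icc (0 : ℝ) 1) (fun x => A.g i x - B.g i x)
  have h4 := dmax_nonneg A B i
  unfold dTerm
  linarith

lemma dersupmax_le_dSys (A B : Sys β k) (i : Fin k) :
    max
      (supOn (Icc (0 : ℝ) β)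
        (fun x => derivWithin (A.g i) (Icc (0 : ℝ) β) x -
          derivWithin (B.g i) (Icc (0 : ℝ) β) x))
      (supOn (Icc (1 - β) 1)
        (fun x => derivWithin (A.g i) (Icc (1 - β) 1) x -
          derivWithin (B.g i) (Icc (1 - β) 1) x)) ≤ dSys A B := by
  refine le_trans ?_ (dTerm_le_dSys A B i)
  have h1 := abs_nonneg (A.p i - B.p i)
  have h2 := supOn_nonneg (Icc (0 : ℝ) 1) (fun x => A.g i x - B.g i x)
  have h3 := supOn_nonneg (Icc (0 : ℝ) 1) (fun x => A.ginv i x - B.ginv i x)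
  unfold dTerm
  linarith

lemma g_pt_le (A B : Sys β k) (i : Fin k) {x : ℝ} (hx : x ∈ Icc (0 : ℝ) 1) :
    |A.g i x - B.g i x| ≤ dSys A B :=
  (le_supOn (g_diff_bdd A B i) hx).trans (gsup_le_dSys A B i)

lemma ginv_pt_le (A B : Sys β k) (i : Fin k) {x : ℝ} (hx : x ∈ Icc (0 : ℝ) 1) :
    |A.ginv i x - B.ginv i x| ≤ dSys A B :=
  (le_supOn (ginv_diff_bdd A B i) hx).trans (ginvsup_le_dSys A B i)

lemma derivL_pt_le (hβ : 0 < β) (A B : Sys β k) (i : Fin k) {x : ℝ}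
    (hx : x ∈ Icc (0 : ℝ) β) :
    |derivWithin (A.g i) (Icc (0 : ℝ) β) x - derivWithin (B.g i) (Icc (0 : ℝ) β) x| ≤
      dSys A B :=
  ((le_supOn (derivL_diff_bdd hβ A B i) hx).trans (le_max_left _ _)).trans
    (dersupmax_le_dSys A B i)

lemma derivR_pt_le (hβ : 0 < β) (A B : Sys β k) (i : Fin k) {x : ℝ}
    (hx : x ∈ Icc (1 - β) 1) :
    |derivWithin (A.g i) (Icc (1 - β) 1) x - derivWithin (B.g i) (Icc (1 - β) 1) x| ≤
      dSys A B :=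
  ((le_supOn (derivR_diff_bdd hβ A B i) hx).trans (le_max_right _ _)).trans
    (dersupmax_le_dSys A B i)

lemma g_monoOn (A : Sys β k) (i : Fin k) : MonotoneOn (A.g i) (Icc (0 : ℝ) 1) :=
  (A.cplus i).mono

lemma ginv_monoOn (A : Sys β k) (i : Fin k) : MonotoneOn (A.ginv i) (Icc (0 : ℝ) 1) := by
  intro y1 h1 y2 h2 h12
  by_contra hlt
  push_neg at hlt
  have h3 : A.g i (A.ginv i y2) ≤ A.g i (A.ginv i y1) :=
    (A.cplus i).mono (A.ginv_mapsTo i h2) (A.ginv_mapsTo i h1) hlt.le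
  rw [A.right_inv i y2 h2, A.right_inv i y1 h1] at h3
  have : y1 = y2 := le_antisymm h12 h3
  rw [this] at hlt
  exact lt_irrefl _ hlt

end AuxSys


section AuxAnalysis

lemma abs_sub_limit_le {c ε : ℝ} {a : ℕ → ℝ} {l : ℝ} (ha : Tendsto a atTop (𝓝 l)) {N : ℕ}
    (h : ∀ m ≥ N, |c - a m| ≤ ε) : |c - l| ≤ ε :=
  le_of_tendsto ((tendsto_const_nhds.sub ha).abs) (eventually_atTop.2 ⟨N, h⟩)

lemma tendsto_limUnder_of_cauchy {a : ℕ → ℝ}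
    (h : ∀ ε > 0, ∃ N, ∀ m ≥ N, ∀ n ≥ N, |a m - a n| ≤ ε) :
    Tendsto a atTop (𝓝 (limUnder atTop a)) := by
  apply tendsto_nhds_limUnder
  apply cauchySeq_tendsto_of_complete
  rw [Metric.cauchySeq_iff]
  intro ε hε
  obtain ⟨N, hN⟩ := h (ε / 2) (by positivity)
  refine ⟨N, fun m hm n hn => ?_⟩
  rw [Real.dist_eq]
  exact lt_of_le_of_lt (hN m hm n hn) (by linarith)

lemma tuo_of_bound {f : ℕ → ℝ → ℝ} {L : ℝ → ℝ} {K : Set ℝ}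
    (hb : ∀ ε > 0, ∃ N, ∀ n ≥ N, ∀ x ∈ K, |f n x - L x| ≤ ε) :
    TendstoUniformlyOn f L atTop K := by
  rw [Metric.tendstoUniformlyOn_iff]
  intro ε hε
  obtain ⟨N, hN⟩ := hb (ε / 2) (by positivity)
  refine eventually_atTop.2 ⟨N, fun n hn x hx => ?_⟩
  rw [Real.dist_eq, abs_sub_comm]
  exact lt_of_le_of_lt (hN n hn x hx) (by linarith)

lemma ftc2 {a b : ℝ} (hab : a < b) {f : ℝ → ℝ} (hf : ContDiffOn ℝ 1 f (Icc a b)) :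
    ∀ x ∈ Icc a b, ∫ t in a..x, derivWithin f (Icc a b) t = f x - f a := by
  intro x hx
  have hcont : ContinuousOn (derivWithin f (Icc a b)) (Icc a b) :=
    hf.continuousOn_derivWithin (uniqueDiffOn_Icc hab) le_rfl
  refine intervalIntegral.integral_eq_sub_of_hasDeriv_right_of_le hx.1
    (hf.continuousOn.mono (Icc_subset_Icc_right hx.2)) (fun t ht => ?_) ?_
  · have ht' : t ∈ Ioo a b := ⟨ht.1, lt_of_lt_of_le ht.2 hx.2⟩
    have hd : HasDerivWithinAt f (derivWithin f (Icc a b) t) (Icc a b) t :=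
      ((hf.differentiableOn one_ne_zero) t (Ioo_subset_Icc_self ht')).hasDerivWithinAt
    exact (hd.hasDerivAt (Icc_mem_nhds ht'.1 ht'.2)).hasDerivWithinAt
  · apply ContinuousOn.intervalIntegrable
    rw [uIcc_of_le hx.1]
    exact hcont.mono (Icc_subset_Icc_right hx.2)

lemma c1_of_rep {a b : ℝ} (hab : a < b) {G D : ℝ → ℝ} (hD : ContinuousOn D (Icc a b))
    (hrep : ∀ x ∈ Icc a b, G x = G a + ∫ t in a..x, D t) :
    ContDiffOn ℝ 1 G (Icc a b) ∧ ∀ x ∈ Icc a b, derivWithin G (Icc a b) x = D x := by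
  set D' : ℝ → ℝ := fun x => D (max a (min b x)) with hD'def
  have hproj : ∀ x, max a (min b x) ∈ Icc a b :=
    fun x => ⟨le_max_left _ _, max_le hab.le (min_le_left _ _)⟩
  have hD'c : Continuous D' :=
    hD.comp_continuous (continuous_const.max (continuous_const.min continuous_id)) hproj
  have hDD' : ∀ x ∈ Icc a b, D' x = D x := fun x hx => by
    simp only [hD'def, min_eq_right hx.2, max_eq_right hx.1]
  have hint : ∀ x ∈ Icc a b, (∫ t in a..x, D t) = ∫ t in a..x, D' t := by
    intro x hx
    refine intervalIntegral.integral_congr fun t ht => ?_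
    rw [uIcc_of_le hx.1] at ht
    exact (hDD' t ⟨ht.1, ht.2.trans hx.2⟩).symm
  have hder : ∀ x ∈ Icc a b, HasDerivWithinAt G (D x) (Icc a b) x := by
    intro x hx
    have h1 : HasDerivAt (fun v => G a + ∫ t in a..v, D' t) (D' x) x :=
      ((hD'c.integral_hasStrictDerivAt a x).hasDerivAt).const_add (G a)
    have h2 : HasDerivWithinAt (fun v => G a + ∫ t in a..v, D' t) (D' x) (Icc a b) x :=
      h1.hasDerivWithinAt
    rw [hDD' x hx] at h2
    exact h2.congr_of_mem (fun y hy => by rw [hrep y hy, hint y hy]) hx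
  have hderiv : ∀ x ∈ Icc a b, derivWithin G (Icc a b) x = D x :=
    fun x hx => (hder x hx).derivWithin (uniqueDiffOn_Icc hab x hx)
  refine ⟨?_, hderiv⟩
  have h1 : (1 : WithTop ℕ∞) = 0 + 1 := by norm_num
  rw [h1, contDiffOn_succ_iff_derivWithin (uniqueDiffOn_Icc hab)]
  refine ⟨fun x hx => (hder x hx).differentiableWithinAt, by simp, ?_⟩
  rw [contDiffOn_zero]
  exact hD.congr hderiv

lemma limit_interval {a b : ℝ} (hab : a < b) {f : ℕ → ℝ → ℝ} {G D : ℝ → ℝ}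
    (hf : ∀ n, ContDiffOn ℝ 1 (f n) (Icc a b))
    (hG : ∀ x ∈ Icc a b, Tendsto (fun n => f n x) atTop (𝓝 (G x)))
    (hDlim : ∀ x ∈ Icc a b, Tendsto (fun n => derivWithin (f n) (Icc a b) x) atTop (𝓝 (D x)))
    (hDu : ∀ ε > 0, ∃ N, ∀ n ≥ N, ∀ x ∈ Icc a b, |derivWithin (f n) (Icc a b) x - D x| ≤ ε) :
    ContDiffOn ℝ 1 G (Icc a b) ∧ ∀ x ∈ Icc a b, derivWithin G (Icc a b) x = D x := by
  have hDn_cont : ∀ n, ContinuousOn (derivWithin (f n) (Icc a b)) (Icc a b) :=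
    fun n => (hf n).continuousOn_derivWithin (uniqueDiffOn_Icc hab) le_rfl
  have hDcont : ContinuousOn D (Icc a b) :=
    TendstoUniformlyOn.continuousOn (tuo_of_bound hDu) (Eventually.of_forall hDn_cont).frequently
  refine c1_of_rep hab hDcont ?_
  intro x hx
  have h1 : ∀ n, f n x = f n a + ∫ t in a..x, derivWithin (f n) (Icc a b) t := by
    intro n
    have := ftc2 hab (hf n) x hx
    linarith
  have h2 : Tendsto (fun n => ∫ t in a..x, derivWithin (f n) (Icc a b) t) atTop
      (𝓝 (∫ t in a..x, D t)) := by
    rw [Metric.tendsto_atTop]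
    intro ε hε
    obtain ⟨N, hN⟩ := hDu (ε / (2 * (b - a))) (by
      have : 0 < b - a := by linarith
      positivity)
    refine ⟨N, fun n hn => ?_⟩
    have hIDn : IntervalIntegrable (derivWithin (f n) (Icc a b)) volume a x := by
      apply ContinuousOn.intervalIntegrable
      rw [uIcc_of_le hx.1]
      exact (hDn_cont n).mono (Icc_subset_Icc_right hx.2)
    have hID : IntervalIntegrable D volume a x := by
      apply ContinuousOn.intervalIntegrable
      rw [uIcc_of_le hx.1]
      exact hDcont.mono (Icc_subset_Icc_right hx.2)
    rw [Real.dist_eq, ← intervalIntegral.integral_sub hIDn hID]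
    have hbound : ∀ t ∈ Set.uIoc a x,
        ‖derivWithin (f n) (Icc a b) t - D t‖ ≤ ε / (2 * (b - a)) := by
      intro t ht
      rw [uIoc_of_le hx.1] at ht
      exact hN n hn t ⟨ht.1.le, ht.2.trans hx.2⟩
    calc |∫ t in a..x, (derivWithin (f n) (Icc a b) t - D t)|
        ≤ ε / (2 * (b - a)) * |x - a| :=
          intervalIntegral.norm_integral_le_of_norm_le_const hbound
      _ ≤ ε / (2 * (b - a)) * (b - a) := by
          apply mul_le_mul_of_nonneg_left _ (by
            have : 0 < b - a := by linarith
            positivity)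
          rw [abs_of_nonneg (by linarith [hx.1])]
          linarith [hx.2, hx.1]
      _ < ε := by
          rw [div_mul_eq_mul_div, mul_comm]
          rw [div_lt_iff₀ (by linarith : (0:ℝ) < 2 * (b - a))]
          nlinarith
  have h3 : Tendsto (fun n => f n a + ∫ t in a..x, derivWithin (f n) (Icc a b) t) atTop
      (𝓝 (G a + ∫ t in a..x, D t)) :=
    (hG a ⟨le_rfl, hab.le⟩).add h2
  have h4 : Tendsto (fun n => f n x) atTop (𝓝 (G a + ∫ t in a..x, D t)) := by
    refine h3.congr fun n => (h1 n).symm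
  exact tendsto_nhds_unique (hG x hx) h4

/-- A crossing lemma for monotone functions: if two sequences tend to the same point `y`,
with images under monotone `H` tending to distinct limits both above `H y`, we get a
contradiction. -/
lemma cross_lemma {H : ℝ → ℝ} (Hmono : MonotoneOn H (Icc (0 : ℝ) 1)) {y : ℝ}
    (hy : y ∈ Icc (0 : ℝ) 1) {A1 A2 : ℕ → ℝ}
    (hA1m : ∀ n, A1 n ∈ Icc (0 : ℝ) 1) (hA2m : ∀ n, A2 n ∈ Icc (0 : ℝ) 1)
    (h2 : Tendsto A2 atTop (𝓝 y)) {c1 c2 : ℝ} (hc : c1 < c2) (hz1 : H y < c1)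
    (hH1 : Tendsto (fun n => H (A1 n)) atTop (𝓝 c1))
    (hH2 : Tendsto (fun n => H (A2 n)) atTop (𝓝 c2)) : False := by
  -- step 1: find n₀ with A1 n₀ > y and H (A1 n₀) < (c1+c2)/2
  have e1 : ∀ᶠ n in atTop, H y < H (A1 n) := hH1.eventually (eventually_gt_nhds hz1)
  have e2 : ∀ᶠ n in atTop, H (A1 n) < (c1 + c2) / 2 :=
    hH1.eventually (eventually_lt_nhds (by linarith))
  obtain ⟨n₀, hn₁, hn₂⟩ := (e1.and e2).exists
  have hA1y : y < A1 n₀ := by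
    by_contra hle
    push_neg at hle
    exact absurd (Hmono (hA1m n₀) hy hle) (not_le.2 hn₁)
  -- step 2: eventually A2 m < A1 n₀, hence H (A2 m) ≤ H (A1 n₀) < mid, contradiction
  have e3 : ∀ᶠ m in atTop, A2 m < A1 n₀ := h2.eventually (eventually_lt_nhds hA1y)
  have e4 : ∀ᶠ m in atTop, (c1 + c2) / 2 < H (A2 m) :=
    hH2.eventually (eventually_gt_nhds (by linarith))
  obtain ⟨m, hm₁, hm₂⟩ := (e3.and e4).exists
  have : H (A2 m) ≤ H (A1 n₀) := Hmono (hA2m m) (hA1m n₀) hm₁.le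
  linarith

lemma cross_lemma' {H : ℝ → ℝ} (Hmono : MonotoneOn H (Icc (0 : ℝ) 1)) {y : ℝ}
    (hy : y ∈ Icc (0 : ℝ) 1) {A1 A2 : ℕ → ℝ}
    (hA1m : ∀ n, A1 n ∈ Icc (0 : ℝ) 1) (hA2m : ∀ n, A2 n ∈ Icc (0 : ℝ) 1)
    (h1 : Tendsto A1 atTop (𝓝 y)) {c1 c2 : ℝ} (hc : c1 < c2) (hz2 : c2 < H y)
    (hH1 : Tendsto (fun n => H (A1 n)) atTop (𝓝 c1))
    (hH2 : Tendsto (fun n => H (A2 n)) atTop (𝓝 c2)) : False := by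
  -- mirror image of cross_lemma
  have e1 : ∀ᶠ n in atTop, H (A2 n) < H y := hH2.eventually (eventually_lt_nhds hz2)
  have e2 : ∀ᶠ n in atTop, (c1 + c2) / 2 < H (A2 n) :=
    hH2.eventually (eventually_gt_nhds (by linarith))
  obtain ⟨n₀, hn₁, hn₂⟩ := (e1.and e2).exists
  have hA2y : A2 n₀ < y := by
    by_contra hle
    push_neg at hle
    exact absurd (Hmono hy (hA2m n₀) hle) (not_le.2 hn₁)
  have e3 : ∀ᶠ m in atTop, A2 n₀ < A1 m := h1.eventually (eventually_gt_nhds hA2y)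
  have e4 : ∀ᶠ m in atTop, H (A1 m) < (c1 + c2) / 2 :=
    hH1.eventually (eventually_lt_nhds (by linarith))
  obtain ⟨m, hm₁, hm₂⟩ := (e3.and e4).exists
  have : H (A2 n₀) ≤ H (A1 m) := Hmono (hA2m n₀) (hA1m m) hm₁.le
  linarith

end AuxAnalysis


section AuxMore

variable {β : ℝ} {k : ℕ}

lemma Sys.ext' {A B : Sys β k} (hg : A.g = B.g) (hgi : A.ginv = B.ginv) (hp : A.p = B.p) :
    A = B := by
  cases A; cases B
  dsimp only at hg hgi hp
  subst hg; subst hgi; subst hp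
  rfl

lemma max_add_max {a b c d e f : ℝ} (h1 : a ≤ c + e) (h2 : b ≤ d + f) :
    max a b ≤ max c d + max e f :=
  max_le (h1.trans (add_le_add (le_max_left _ _) (le_max_left _ _)))
    (h2.trans (add_le_add (le_max_right _ _) (le_max_right _ _)))

lemma supOn_self_sub (K : Set ℝ) (f : ℝ → ℝ) : supOn K (fun x => f x - f x) = 0 :=
  le_antisymm (supOn_le le_rfl fun x _ => by simp) (supOn_nonneg _ _)

end AuxMore

/-- `(F₀, d)` is a complete metric space: `d` is symmetric,
vanishes exactly on the diagonal, satisfies the triangle inequality, is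
nonnegative, and every Cauchy sequence converges. -/
theorem F0_complete_metric (β : ℝ) (hβ : 0 < β) (k : ℕ) :
    (∀ A B : Sys β k, dSys A B = dSys B A) ∧
    (∀ A B : Sys β k, dSys A B = 0 ↔ A = B) ∧
    (∀ A B C : Sys β k, dSys A C ≤ dSys A B + dSys B C) ∧
    (∀ A B : Sys β k, 0 ≤ dSys A B) ∧
    (∀ u : ℕ → Sys β k,
      (∀ ε > (0 : ℝ), ∃ N : ℕ, ∀ m ≥ N, ∀ n ≥ N, dSys (u m) (u n) < ε) →
      ∃ L : Sys β k, Tendsto (fun n => dSys (u n) L) atTop (𝓝 0)) := by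
  have hβ1 : (1 : ℝ) - β < 1 := by linarith
  refine ⟨?_, ?_, ?_, ?_, ?_⟩
  · -- symmetry
    intro A B
    rw [dSys_eq_sum_dTerm, dSys_eq_sum_dTerm]
    refine Finset.sum_congr rfl fun i _ => ?_
    unfold dTerm
    rw [abs_sub_comm, supOn_comm (Icc (0 : ℝ) 1) (A.g i) (B.g i),
      supOn_comm (Icc (0 : ℝ) 1) (A.ginv i) (B.ginv i),
      supOn_comm (Icc (0 : ℝ) β) (derivWithin (A.g i) (Icc (0 : ℝ) β))
        (derivWithin (B.g i) (Icc (0 : ℝ) β)),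
      supOn_comm (Icc (1 - β) 1) (derivWithin (A.g i) (Icc (1 - β) 1))
        (derivWithin (B.g i) (Icc (1 - β) 1))]
  · -- vanishing iff equal
    intro A B
    constructor
    · intro h
      have hterm : ∀ i ∈ Finset.univ, dTerm A B i = 0 :=
        (Finset.sum_eq_zero_iff_of_nonneg fun i _ => dTerm_nonneg A B i).1
          (by rw [← dSys_eq_sum_dTerm]; exact h)
      have key : ∀ i : Fin k, |A.p i - B.p i| = 0 ∧
          supOn (Icc (0 : ℝ) 1) (fun x => A.g i x - B.g i x) = 0 ∧
          supOn (Icc (0 : ℝ) 1) (fun x => A.ginv i x - B.ginv i x) = 0 := by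
        intro i
        have h1 := hterm i (Finset.mem_univ i)
        have h2 := abs_nonneg (A.p i - B.p i)
        have h3 := supOn_nonneg (Icc (0 : ℝ) 1) (fun x => A.g i x - B.g i x)
        have h4 := supOn_nonneg (Icc (0 : ℝ) 1) (fun x => A.ginv i x - B.ginv i x)
        have h5 := dmax_nonneg A B i
        unfold dTerm at h1
        exact ⟨by linarith, by linarith, by linarith⟩
      refine Sys.ext' ?_ ?_ ?_
      · funext i x
        have hcl : ∀ y ∈ Icc (0 : ℝ) 1, A.g i y = B.g i y := by
          intro y hy
          have h6 := le_supOn (g_diff_bdd A B i) hy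
          rw [(key i).2.1] at h6
          have h7 : |A.g i y - B.g i y| = 0 := le_antisymm h6 (abs_nonneg _)
          rwa [abs_eq_zero, sub_eq_zero] at h7
        rw [A.g_clamp i x, B.g_clamp i x]
        exact hcl _ (clampI_mem x)
      · funext i x
        have hcl : ∀ y ∈ Icc (0 : ℝ) 1, A.ginv i y = B.ginv i y := by
          intro y hy
          have h6 := le_supOn (ginv_diff_bdd A B i) hy
          rw [(key i).2.2] at h6
          have h7 : |A.ginv i y - B.ginv i y| = 0 := le_antisymm h6 (abs_nonneg _)
          rwa [abs_eq_zero, sub_eq_zero] at h7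
        rw [A.ginv_clamp i x, B.ginv_clamp i x]
        exact hcl _ (clampI_mem x)
      · funext i
        have h7 := (key i).1
        rwa [abs_eq_zero, sub_eq_zero] at h7
    · intro h
      subst h
      rw [dSys_eq_sum_dTerm]
      refine Finset.sum_eq_zero fun i _ => ?_
      unfold dTerm
      rw [sub_self, abs_zero, supOn_self_sub, supOn_self_sub, supOn_self_sub, supOn_self_sub]
      simp
  · -- triangle inequality
    intro A B C
    rw [dSys_eq_sum_dTerm, dSys_eq_sum_dTerm, dSys_eq_sum_dTerm, ← Finset.sum_add_distrib]
    refine Finset.sum_le_sum fun i _ => ?_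
    unfold dTerm
    have t1 : |A.p i - C.p i| ≤ |A.p i - B.p i| + |B.p i - C.p i| := abs_sub_le _ _ _
    have t2 := supOn_triangle (g_diff_bdd A B i) (g_diff_bdd B C i)
    have t3 := supOn_triangle (ginv_diff_bdd A B i) (ginv_diff_bdd B C i)
    have t4 := supOn_triangle (derivL_diff_bdd hβ A B i) (derivL_diff_bdd hβ B C i)
    have t5 := supOn_triangle (derivR_diff_bdd hβ A B i) (derivR_diff_bdd hβ B C i)
    have t6 := max_add_max t4 t5
    linarith
  · intro A B
    exact dSys_nonneg' A B
  · -- completeness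
    intro u hC
    set gl : Fin k → ℝ → ℝ := fun i x => limUnder atTop (fun n => (u n).g i x) with hgl
    set gil : Fin k → ℝ → ℝ := fun i x => limUnder atTop (fun n => (u n).ginv i x) with hgil
    set pl : Fin k → ℝ := fun i => limUnder atTop (fun n => (u n).p i) with hpl
    set DL : Fin k → ℝ → ℝ :=
      fun i x => limUnder atTop (fun n => derivWithin ((u n).g i) (Icc (0 : ℝ) β) x) with hDL
    set DR : Fin k → ℝ → ℝ :=
      fun i x => limUnder atTop (fun n => derivWithin ((u n).g i) (Icc (1 - β) 1) x) with hDR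
    have hC' : ∀ ε > (0 : ℝ), ∃ N, ∀ m ≥ N, ∀ n ≥ N, dSys (u m) (u n) ≤ ε := fun ε hε =>
      (hC ε hε).imp fun _ h m hm n hn => (h m hm n hn).le
    -- pointwise convergence of all the components
    have hppt : ∀ i, Tendsto (fun n => (u n).p i) atTop (𝓝 (pl i)) := by
      intro i
      rw [hpl]
      exact tendsto_limUnder_of_cauchy fun ε hε => (hC' ε hε).imp
        fun N h m hm n hn => (p_pt_le (u m) (u n) i).trans (h m hm n hn)
    have hgpt : ∀ i, ∀ x ∈ Icc (0 : ℝ) 1,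
        Tendsto (fun n => (u n).g i x) atTop (𝓝 (gl i x)) := by
      intro i x hx
      rw [hgl]
      exact tendsto_limUnder_of_cauchy fun ε hε => (hC' ε hε).imp
        fun N h m hm n hn => (g_pt_le (u m) (u n) i hx).trans (h m hm n hn)
    have hgipt : ∀ i, ∀ x ∈ Icc (0 : ℝ) 1,
        Tendsto (fun n => (u n).ginv i x) atTop (𝓝 (gil i x)) := by
      intro i x hx
      rw [hgil]
      exact tendsto_limUnder_of_cauchy fun ε hε => (hC' ε hε).imp
        fun N h m hm n hn => (ginv_pt_le (u m) (u n) i hx).trans (h m hm n hn)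
    have hDLpt : ∀ i, ∀ x ∈ Icc (0 : ℝ) β,
        Tendsto (fun n => derivWithin ((u n).g i) (Icc (0 : ℝ) β) x) atTop (𝓝 (DL i x)) := by
      intro i x hx
      rw [hDL]
      exact tendsto_limUnder_of_cauchy fun ε hε => (hC' ε hε).imp
        fun N h m hm n hn => (derivL_pt_le hβ (u m) (u n) i hx).trans (h m hm n hn)
    have hDRpt : ∀ i, ∀ x ∈ Icc (1 - β) 1,
        Tendsto (fun n => derivWithin ((u n).g i) (Icc (1 - β) 1) x) atTop (𝓝 (DR i x)) := by
      intro i x hx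
      rw [hDR]
      exact tendsto_limUnder_of_cauchy fun ε hε => (hC' ε hε).imp
        fun N h m hm n hn => (derivR_pt_le hβ (u m) (u n) i hx).trans (h m hm n hn)
    -- clamping compatibility
    have hgl_clamp : ∀ (i : Fin k) (x : ℝ), gl i x = gl i (clampI x) := by
      intro i x
      rw [hgl]
      exact congrArg (limUnder atTop) (funext fun n => (u n).g_clamp i x)
    have hgil_clamp : ∀ (i : Fin k) (x : ℝ), gil i x = gil i (clampI x) := by
      intro i x
      rw [hgil]
      exact congrArg (limUnder atTop) (funext fun n => (u n).ginv_clamp i x)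
    have hgpt' : ∀ (i : Fin k) (x : ℝ),
        Tendsto (fun n => (u n).g i x) atTop (𝓝 (gl i x)) := by
      intro i x
      rw [hgl_clamp i x]
      exact (hgpt i (clampI x) (clampI_mem x)).congr fun n => ((u n).g_clamp i x).symm
    -- uniform bounds
    have hpu : ∀ ε > (0 : ℝ), ∃ N, ∀ n ≥ N, ∀ i, |(u n).p i - pl i| ≤ ε := fun ε hε =>
      (hC' ε hε).imp fun N h n hn i => abs_sub_limit_le (hppt i)
        fun m hm => (p_pt_le (u n) (u m) i).trans (h n hn m hm)
    have hgu : ∀ ε > (0 : ℝ), ∃ N, ∀ n ≥ N, ∀ i, ∀ x ∈ Icc (0 : ℝ) 1,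
        |(u n).g i x - gl i x| ≤ ε := fun ε hε =>
      (hC' ε hε).imp fun N h n hn i x hx => abs_sub_limit_le (hgpt i x hx)
        fun m hm => (g_pt_le (u n) (u m) i hx).trans (h n hn m hm)
    have hgiu : ∀ ε > (0 : ℝ), ∃ N, ∀ n ≥ N, ∀ i, ∀ x ∈ Icc (0 : ℝ) 1,
        |(u n).ginv i x - gil i x| ≤ ε := fun ε hε =>
      (hC' ε hε).imp fun N h n hn i x hx => abs_sub_limit_le (hgipt i x hx)
        fun m hm => (ginv_pt_le (u n) (u m) i hx).trans (h n hn m hm)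
    have hDLu : ∀ ε > (0 : ℝ), ∃ N, ∀ n ≥ N, ∀ i, ∀ x ∈ Icc (0 : ℝ) β,
        |derivWithin ((u n).g i) (Icc (0 : ℝ) β) x - DL i x| ≤ ε := fun ε hε =>
      (hC' ε hε).imp fun N h n hn i x hx => abs_sub_limit_le (hDLpt i x hx)
        fun m hm => (derivL_pt_le hβ (u n) (u m) i hx).trans (h n hn m hm)
    have hDRu : ∀ ε > (0 : ℝ), ∃ N, ∀ n ≥ N, ∀ i, ∀ x ∈ Icc (1 - β) 1,
        |derivWithin ((u n).g i) (Icc (1 - β) 1) x - DR i x| ≤ ε := fun ε hε =>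
      (hC' ε hε).imp fun N h n hn i x hx => abs_sub_limit_le (hDRpt i x hx)
        fun m hm => (derivR_pt_le hβ (u n) (u m) i hx).trans (h n hn m hm)
    -- the limit maps send [0,1] to [0,1]
    have hgl_mem : ∀ i, ∀ x ∈ Icc (0 : ℝ) 1, gl i x ∈ Icc (0 : ℝ) 1 := fun i x hx =>
      isClosed_Icc.mem_of_tendsto (hgpt i x hx)
        (Eventually.of_forall fun n => (u n).g_mem i hx)
    have hgil_mem : ∀ i, ∀ x ∈ Icc (0 : ℝ) 1, gil i x ∈ Icc (0 : ℝ) 1 := fun i x hx =>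
      isClosed_Icc.mem_of_tendsto (hgipt i x hx)
        (Eventually.of_forall fun n => (u n).ginv_mapsTo i hx)
    -- monotonicity of the limit maps
    have hgl_mono : ∀ i, MonotoneOn (gl i) (Icc (0 : ℝ) 1) := fun i x hx y hy hxy =>
      le_of_tendsto_of_tendsto' (hgpt i x hx) (hgpt i y hy)
        fun n => ((u n).cplus i).mono hx hy hxy
    have hgil_mono : ∀ i, MonotoneOn (gil i) (Icc (0 : ℝ) 1) := fun i x hx y hy hxy =>
      le_of_tendsto_of_tendsto' (hgipt i x hx) (hgipt i y hy)
        fun n => ginv_monoOn (u n) i hx hy hxy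
    -- continuity of the limit maps
    have hgl_cont : ∀ i, ContinuousOn (gl i) (Icc (0 : ℝ) 1) := fun i =>
      TendstoUniformlyOn.continuousOn
        (tuo_of_bound (f := fun n x => (u n).g i x)
          fun ε hε => (hgu ε hε).imp fun N h n hn x hx => h n hn i x hx)
        (Eventually.of_forall fun n => ((u n).cplus i).contOn).frequently
    -- endpoint values
    have hgl0 : ∀ i, gl i 0 = 0 := fun i =>
      tendsto_nhds_unique (hgpt i 0 ⟨le_rfl, zero_le_one⟩)
        (by rw [show (fun n => (u n).g i 0) = fun _ => (0 : ℝ) from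
              funext fun n => ((u n).cplus i).map_zero]
            exact tendsto_const_nhds)
    have hgl1 : ∀ i, gl i 1 = 1 := fun i =>
      tendsto_nhds_unique (hgpt i 1 ⟨zero_le_one, le_rfl⟩)
        (by rw [show (fun n => (u n).g i 1) = fun _ => (1 : ℝ) from
              funext fun n => ((u n).cplus i).map_one]
            exact tendsto_const_nhds)
    -- continuous differentiability on the two lateral intervals
    have hc1L : ∀ i, ContDiffOn ℝ 1 (gl i) (Icc (0 : ℝ) β) ∧
        ∀ x ∈ Icc (0 : ℝ) β, derivWithin (gl i) (Icc (0 : ℝ) β) x = DL i x := fun i =>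
      limit_interval hβ (fun n => ((u n).cplus i).c1_left) (fun x _ => hgpt' i x)
        (fun x hx => hDLpt i x hx)
        (fun ε hε => (hDLu ε hε).imp fun N h n hn x hx => h n hn i x hx)
    have hc1R : ∀ i, ContDiffOn ℝ 1 (gl i) (Icc (1 - β) 1) ∧
        ∀ x ∈ Icc (1 - β) 1, derivWithin (gl i) (Icc (1 - β) 1) x = DR i x := fun i =>
      limit_interval hβ1 (fun n => ((u n).cplus i).c1_right) (fun x _ => hgpt' i x)
        (fun x hx => hDRpt i x hx)
        (fun ε hε => (hDRu ε hε).imp fun N h n hn x hx => h n hn i x hx)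
    -- right inverse: gl i (gil i y) = y
    have hrinv : ∀ i, ∀ y ∈ Icc (0 : ℝ) 1, gl i (gil i y) = y := by
      intro i y hy
      have hmem : ∀ n, (u n).ginv i y ∈ Icc (0 : ℝ) 1 := fun n => (u n).ginv_mapsTo i hy
      have h2 : Tendsto (fun n => (u n).ginv i y) atTop (𝓝[Icc (0 : ℝ) 1] (gil i y)) :=
        tendsto_nhdsWithin_of_tendsto_nhds_of_eventually_within _ (hgipt i y hy)
          (Eventually.of_forall hmem)
      have h3 : Tendsto (fun n => gl i ((u n).ginv i y)) atTop (𝓝 (gl i (gil i y))) :=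
        ((hgl_cont i) (gil i y) (hgil_mem i y hy)).tendsto.comp h2
      have h4 : Tendsto (fun n => gl i ((u n).ginv i y)) atTop (𝓝 y) := by
        rw [Metric.tendsto_atTop]
        intro ε hε
        obtain ⟨N, hN⟩ := hgu (ε / 2) (by positivity)
        refine ⟨N, fun n hn => ?_⟩
        have h5 := hN n hn i ((u n).ginv i y) (hmem n)
        rw [(u n).right_inv i y hy] at h5
        rw [Real.dist_eq, abs_sub_comm]
        exact lt_of_le_of_lt h5 (by linarith)
      exact tendsto_nhds_unique h3 h4
    -- the key fact (3): gil i ((u n).g i c)  →  c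
    have h3fact : ∀ i, ∀ c ∈ Icc (0 : ℝ) 1,
        Tendsto (fun n => gil i ((u n).g i c)) atTop (𝓝 c) := by
      intro i c hc
      rw [Metric.tendsto_atTop]
      intro ε hε
      obtain ⟨N, hN⟩ := hgiu (ε / 2) (by positivity)
      refine ⟨N, fun n hn => ?_⟩
      have h5 := hN n hn i ((u n).g i c) ((u n).g_mem i hc)
      rw [(u n).left_inv i c hc] at h5
      rw [Real.dist_eq, abs_sub_comm]
      exact lt_of_le_of_lt h5 (by linarith)
    -- left inverse: gil i (gl i x) = x
    have hlinv : ∀ i, ∀ x ∈ Icc (0 : ℝ) 1, gil i (gl i x) = x := by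
      intro i x hx
      have hymem : gl i x ∈ Icc (0 : ℝ) 1 := hgl_mem i x hx
      have hzmem : gil i (gl i x) ∈ Icc (0 : ℝ) 1 := hgil_mem i _ hymem
      have hGz : gl i (gil i (gl i x)) = gl i x := hrinv i (gl i x) hymem
      rcases lt_trichotomy (gil i (gl i x)) x with hlt | heq | hgt
      · exfalso
        have hzx : gil i (gl i x) < x := hlt
        have hc1mem : gil i (gl i x) + (x - gil i (gl i x)) / 3 ∈ Icc (0 : ℝ) 1 :=
          ⟨by linarith [hzmem.1], by linarith [hx.2]⟩
        have hc2mem : gil i (gl i x) + 2 * ((x - gil i (gl i x)) / 3) ∈ Icc (0 : ℝ) 1 :=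
          ⟨by linarith [hzmem.1], by linarith [hx.2]⟩
        have hGc1 : gl i (gil i (gl i x) + (x - gil i (gl i x)) / 3) = gl i x := by
          have hle := hgl_mono i hzmem hc1mem (by linarith)
          rw [hGz] at hle
          exact le_antisymm (hgl_mono i hc1mem hx (by linarith)) hle
        have hGc2 : gl i (gil i (gl i x) + 2 * ((x - gil i (gl i x)) / 3)) = gl i x := by
          have hle := hgl_mono i hzmem hc2mem (by linarith)
          rw [hGz] at hle
          exact le_antisymm (hgl_mono i hc2mem hx (by linarith)) hle
        refine cross_lemma (hgil_mono i) hymem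
          (fun n => (u n).g_mem i hc1mem) (fun n => (u n).g_mem i hc2mem)
          ?_ (by linarith : gil i (gl i x) + (x - gil i (gl i x)) / 3 <
            gil i (gl i x) + 2 * ((x - gil i (gl i x)) / 3))
          (by linarith) ?_ ?_
        · have hh := hgpt i _ hc2mem
          rw [hGc2] at hh
          exact hh
        · exact h3fact i _ hc1mem
        · exact h3fact i _ hc2mem
      · exact heq
      · exfalso
        have hzx : x < gil i (gl i x) := hgt
        have hc1mem : x + (gil i (gl i x) - x) / 3 ∈ Icc (0 : ℝ) 1 :=
          ⟨by linarith [hx.1], by linarith [hzmem.2]⟩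
        have hc2mem : x + 2 * ((gil i (gl i x) - x) / 3) ∈ Icc (0 : ℝ) 1 :=
          ⟨by linarith [hx.1], by linarith [hzmem.2]⟩
        have hGc1 : gl i (x + (gil i (gl i x) - x) / 3) = gl i x := by
          have hle := hgl_mono i hc1mem hzmem (by linarith)
          rw [hGz] at hle
          exact le_antisymm hle (hgl_mono i hx hc1mem (by linarith))
        have hGc2 : gl i (x + 2 * ((gil i (gl i x) - x) / 3)) = gl i x := by
          have hle := hgl_mono i hc2mem hzmem (by linarith)
          rw [hGz] at hle
          exact le_antisymm hle (hgl_mono i hx hc2mem (by linarith))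
        refine cross_lemma' (hgil_mono i) hymem
          (fun n => (u n).g_mem i hc1mem) (fun n => (u n).g_mem i hc2mem)
          ?_ (by linarith : x + (gil i (gl i x) - x) / 3 <
            x + 2 * ((gil i (gl i x) - x) / 3))
          (by linarith) ?_ ?_
        · have hh := hgpt i _ hc1mem
          rw [hGc1] at hh
          exact hh
        · exact h3fact i _ hc1mem
        · exact h3fact i _ hc2mem
    -- the limit probability vector
    have hplv : ProbVec pl := by
      constructor
      · intro i
        exact ge_of_tendsto' (hppt i) fun n => (u n).prob.1 i
      · have hsum : Tendsto (fun n => ∑ i : Fin k, (u n).p i) atTop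
            (𝓝 (∑ i : Fin k, pl i)) := tendsto_finset_sum _ fun i _ => hppt i
        have hone : (fun n => ∑ i : Fin k, (u n).p i) = fun _ => (1 : ℝ) :=
          funext fun n => (u n).prob.2
        rw [hone] at hsum
        exact tendsto_nhds_unique hsum tendsto_const_nhds
    -- assemble the limit system
    set L : Sys β k :=
      { g := gl, ginv := gil, p := pl, prob := hplv
        cplus := fun i => ⟨fun x hx => hgl_mem i x hx, hgl_cont i, hgl_mono i, hgl0 i,
          hgl1 i, (hc1L i).1, (hc1R i).1⟩
        ginv_mapsTo := fun i x hx => hgil_mem i x hx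
        left_inv := hlinv
        right_inv := hrinv
        g_clamp := hgl_clamp
        ginv_clamp := hgil_clamp } with hLdef
    refine ⟨L, ?_⟩
    have hLg : L.g = gl := rfl
    have hLgi : L.ginv = gil := rfl
    have hLp : L.p = pl := rfl
    rw [Metric.tendsto_atTop]
    intro ε hε
    have hden : (0 : ℝ) < 4 * (k : ℝ) + 4 := by positivity
    have hε' : (0 : ℝ) < ε / (4 * (k : ℝ) + 4) := by positivity
    obtain ⟨N1, h1⟩ := hpu _ hε'
    obtain ⟨N2, h2⟩ := hgu _ hε'
    obtain ⟨N3, h3⟩ := hgiu _ hε'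
    obtain ⟨N4, h4⟩ := hDLu _ hε'
    obtain ⟨N5, h5⟩ := hDRu _ hε'
    refine ⟨N1.max (N2.max (N3.max (N4.max N5))), fun n hn => ?_⟩
    have hn1 : n ≥ N1 := le_trans (le_max_left _ _) hn
    have hn2 : n ≥ N2 := le_trans ((le_max_left _ _).trans (le_max_right _ _)) hn
    have hn3 : n ≥ N3 := le_trans (((le_max_left _ _).trans (le_max_right _ _)).trans
      (le_max_right _ _)) hn
    have hn4 : n ≥ N4 := le_trans ((((le_max_left _ _).trans (le_max_right _ _)).trans
      (le_max_right _ _)).trans (le_max_right _ _)) hn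
    have hn5 : n ≥ N5 := le_trans ((((le_max_right _ _).trans (le_max_right _ _)).trans
      (le_max_right _ _)).trans (le_max_right _ _)) hn
    rw [Real.dist_eq, sub_zero, abs_of_nonneg (dSys_nonneg' _ _)]
    have hterm : ∀ i : Fin k, dTerm (u n) L i ≤ 4 * (ε / (4 * (k : ℝ) + 4)) := by
      intro i
      have t1 : |(u n).p i - L.p i| ≤ ε / (4 * (k : ℝ) + 4) := by
        rw [hLp]; exact h1 n hn1 i
      have t2 : supOn (Icc (0 : ℝ) 1) (fun x => (u n).g i x - L.g i x) ≤
          ε / (4 * (k : ℝ) + 4) := by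
        rw [hLg]
        exact supOn_le hε'.le fun x hx => h2 n hn2 i x hx
      have t3 : supOn (Icc (0 : ℝ) 1) (fun x => (u n).ginv i x - L.ginv i x) ≤
          ε / (4 * (k : ℝ) + 4) := by
        rw [hLgi]
        exact supOn_le hε'.le fun x hx => h3 n hn3 i x hx
      have t4 : supOn (Icc (0 : ℝ) β) (fun x => derivWithin ((u n).g i) (Icc (0 : ℝ) β) x -
          derivWithin (L.g i) (Icc (0 : ℝ) β) x) ≤ ε / (4 * (k : ℝ) + 4) := by
        rw [hLg]
        refine supOn_le hε'.le fun x hx => ?_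
        rw [(hc1L i).2 x hx]
        exact h4 n hn4 i x hx
      have t5 : supOn (Icc (1 - β) 1) (fun x => derivWithin ((u n).g i) (Icc (1 - β) 1) x -
          derivWithin (L.g i) (Icc (1 - β) 1) x) ≤ ε / (4 * (k : ℝ) + 4) := by
        rw [hLg]
        refine supOn_le hε'.le fun x hx => ?_
        rw [(hc1R i).2 x hx]
        exact h5 n hn5 i x hx
      have t6 := max_le t4 t5
      unfold dTerm
      linarith
    have hsum : dSys (u n) L ≤ (k : ℝ) * (4 * (ε / (4 * (k : ℝ) + 4))) := by
      rw [dSys_eq_sum_dTerm]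
      calc ∑ i : Fin k, dTerm (u n) L i ≤
          ∑ _i : Fin k, 4 * (ε / (4 * (k : ℝ) + 4)) :=
            Finset.sum_le_sum fun i _ => hterm i
        _ = (k : ℝ) * (4 * (ε / (4 * (k : ℝ) + 4))) := by
            rw [Finset.sum_const, Finset.card_univ, Fintype.card_fin, nsmul_eq_mul]
    refine lt_of_le_of_lt hsum ?_
    have hk0 : (0 : ℝ) ≤ (k : ℝ) := Nat.cast_nonneg k
    rw [show (k : ℝ) * (4 * (ε / (4 * (k : ℝ) + 4))) =
      ((k : ℝ) * 4 * ε) / (4 * (k : ℝ) + 4) by ring]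
    rw [div_lt_iff₀ hden]
    nlinarith

end
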